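/- Let Γ be a finite connected graph with edge set E, |E| = n, and let SP_Γ ⊂ ℝⁿ be the convex hull of the incidence vectors 1_{E∖T} of complements of spanning trees T of Γ. If Γ is 2-connected with no self-loops, then SP_Γ has dimension n − 1. -/

import Mathlib

open scoped Classical

/-- A finite multigraph on vertex type `V` with edge type `E` is given by an
endpoint map `G : E → Sym2 V`. -/
structure Subgraph {V E : Type} [Fintype V] [Fintype E] [DecidableEq V] [DecidableEq E]
    (G : E → Sym2 V) where
  verts : Finset V
  edges : Finset E
  incl : ∀ e ∈ edges, ∀ v ∈ G e, v ∈ verts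

variable {V E : Type} [Fintype V] [Fintype E] [DecidableEq V] [DecidableEq E]

/-- Number of connected components of a subgraph. -/
noncomputable def comps (G : E → Sym2 V) (H : Subgraph G) : ℕ :=
  Nat.card (Quot fun a b : {v : V // v ∈ H.verts} => ∃ e ∈ H.edges, G e = s(a.1, b.1))

/-- Cycle rank (first Betti number) `ℓ(H) = |E(H)| - |V(H)| + c(H)`. -/
noncomputable def cycleRank (G : E → Sym2 V) (H : Subgraph G) : ℤ :=
  (H.edges.card : ℤ) - (H.verts.card : ℤ) + (comps G H : ℤ)

/-- The spanning subgraph with all vertices and edge set `S`. -/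
def spanningSub (G : E → Sym2 V) (S : Finset E) : Subgraph G where
  verts := Finset.univ
  edges := S
  incl := fun _ _ v _ => Finset.mem_univ v

/-- `T` is (the edge set of) a spanning tree of `G`. -/
noncomputable def IsSpanningTree (G : E → Sym2 V) (T : Finset E) : Prop :=
  T.card + 1 = Fintype.card V ∧ comps G (spanningSub G T) = 1

/-- The graph `G` is connected. -/
noncomputable def GraphConnected (G : E → Sym2 V) : Prop :=
  comps G (spanningSub G Finset.univ) = 1

/-- Real incidence vector of a set of edges. -/
def ind (S : Finset E) : E → ℝ := fun e => if e ∈ S then 1 else 0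

/-- Integer incidence vector of a set of edges. -/
def indZ (S : Finset E) : E → ℤ := fun e => if e ∈ S then 1 else 0

/-- The subgraph obtained by deleting the vertex `v` and all edges incident to it. -/
noncomputable def deleteVert (G : E → Sym2 V) (v : V) : Subgraph G where
  verts := Finset.univ.erase v
  edges := Finset.univ.filter fun e => v ∉ G e
  incl := by
    intro e he w hw
    rw [Finset.mem_filter] at he
    refine Finset.mem_erase.mpr ⟨?_, Finset.mem_univ w⟩
    rintro rfl
    exact he.2 hw

/-! ### Auxiliary theory of reachability and component counting -/

namespace SP

/-- One-edge step relation of the spanning subgraph with edge set `S`. -/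
def step (G : E → Sym2 V) (S : Finset E) (a b : V) : Prop := ∃ e ∈ S, G e = s(a, b)

/-- Reachability in the spanning subgraph with edge set `S`. -/
def Reach (G : E → Sym2 V) (S : Finset E) : V → V → Prop :=
  Relation.ReflTransGen (step G S)

/-- Number of connected components of the spanning subgraph with edge set `S`. -/
noncomputable def cc (G : E → Sym2 V) (S : Finset E) : ℕ := Nat.card (Quot (step G S))

variable {G : E → Sym2 V} {S B T : Finset E} {a b c x y w : V} {f : E}

theorem step_symm (h : step G S a b) : step G S b a := by
  obtain ⟨e, he, hge⟩ := h
  exact ⟨e, he, by rw [hge, Sym2.eq_swap]⟩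

theorem Reach.refl : Reach G S a a := Relation.ReflTransGen.refl

theorem Reach.single (h : step G S a b) : Reach G S a b := Relation.ReflTransGen.single h

theorem Reach.symm (h : Reach G S a b) : Reach G S b a :=
  haveI : Std.Symm (step G S) := ⟨fun _ _ hs => step_symm hs⟩
  (Relation.ReflTransGen.stdSymm (r := step G S)).symm _ _ h

theorem Reach.trans (h : Reach G S a b) (h' : Reach G S b c) : Reach G S a c :=
  Relation.ReflTransGen.trans h h'

theorem eqvGen_iff : Relation.EqvGen (step G S) a b ↔ Reach G S a b := by
  constructor
  · intro h
    induction h with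
    | rel _ _ h => exact Reach.single h
    | refl _ => exact Reach.refl
    | symm _ _ _ ih => exact ih.symm
    | trans _ _ _ _ _ ih1 ih2 => exact ih1.trans ih2
  · intro h
    induction h with
    | refl => exact Relation.EqvGen.refl _
    | tail _ h ih => exact Relation.EqvGen.trans _ _ _ ih (Relation.EqvGen.rel _ _ h)

theorem quot_mk_eq_iff : Quot.mk (step G S) a = Quot.mk (step G S) b ↔ Reach G S a b :=
  Quot.eq.trans eqvGen_iff

theorem reach_mono (h : S ⊆ B) (hr : Reach G S a b) : Reach G B a b :=
  Relation.ReflTransGen.mono (r := step G S) (p := step G B)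
    (fun _ _ ⟨e, he, hg⟩ => ⟨e, h he, hg⟩) a b hr

theorem reach_of_closure (hcl : ∀ x y, step G B x y → Reach G S x y)
    (h : Reach G B a b) : Reach G S a b := by
  induction h with
  | refl => exact Reach.refl
  | tail _ h2 ih => exact ih.trans (hcl _ _ h2)

/-- The canonical surjection between component quotients. -/
def ccMap (G : E → Sym2 V) (h : S ⊆ B) : Quot (step G S) → Quot (step G B) :=
  Quot.lift (Quot.mk (step G B))
    (fun _ _ hab => Quot.sound (by obtain ⟨e, he, hg⟩ := hab; exact ⟨e, h he, hg⟩))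

theorem ccMap_mk (h : S ⊆ B) (a : V) :
    ccMap G h (Quot.mk (step G S) a) = Quot.mk (step G B) a := rfl

theorem ccMap_surj (h : S ⊆ B) : Function.Surjective (ccMap G h) := by
  intro q
  obtain ⟨a, rfl⟩ := Quot.exists_rep q
  exact ⟨Quot.mk _ a, rfl⟩

theorem cc_le (h : S ⊆ B) : cc G B ≤ cc G S :=
  Nat.card_le_card_of_surjective _ (ccMap_surj h)

theorem cc_eq_of_closure (hSB : S ⊆ B) (hcl : ∀ x y, step G B x y → Reach G S x y) :
    cc G B = cc G S := by
  refine (Nat.card_eq_of_bijective (ccMap G hSB) ⟨?_, ccMap_surj hSB⟩).symm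
  intro q q' h
  obtain ⟨a, rfl⟩ := Quot.exists_rep q
  obtain ⟨b, rfl⟩ := Quot.exists_rep q'
  rw [ccMap_mk, ccMap_mk] at h
  exact quot_mk_eq_iff.mpr (reach_of_closure hcl (quot_mk_eq_iff.mp h))

theorem cc_empty : cc G (∅ : Finset E) = Fintype.card V := by
  have hbij : Function.Bijective (Quot.mk (step G (∅ : Finset E))) := by
    refine ⟨fun a b h => ?_, Quot.mk_surjective⟩
    have := quot_mk_eq_iff.mp h
    induction this with
    | refl => rfl
    | tail _ h2 ih =>
      obtain ⟨e, he, _⟩ := h2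
      exact absurd he (Finset.notMem_empty e)
  rw [cc, ← Nat.card_eq_fintype_card]
  exact (Nat.card_eq_of_bijective _ hbij).symm

theorem reach_of_cc_one (h : cc G S = 1) (a b : V) : Reach G S a b := by
  have hsub : Subsingleton (Quot (step G S)) := (Nat.card_eq_one_iff_unique.mp h).1
  exact quot_mk_eq_iff.mp (hsub.elim _ _)

theorem exists_endpoints (z : Sym2 V) : ∃ x y, z = s(x, y) :=
  Sym2.ind (fun x y => ⟨x, y, rfl⟩) z

theorem reach_insert_split (hf : G f = s(x, y)) (h : Reach G (insert f S) a b) :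
    Reach G S a b ∨ (Reach G S a x ∧ Reach G S y b) ∨ (Reach G S a y ∧ Reach G S x b) := by
  induction h using Relation.ReflTransGen.head_induction_on with
  | refl => exact Or.inl Reach.refl
  | @head a' c h' _ ih =>
    obtain ⟨e, he, hge⟩ := h'
    rcases Finset.mem_insert.mp he with rfl | heS
    · rw [hf] at hge
      rcases Sym2.eq_iff.mp hge with ⟨hxa, hyc⟩ | ⟨hxc, hya⟩
      · subst hxa; subst hyc
        rcases ih with h1 | ⟨h1, h2⟩ | ⟨h1, h2⟩
        · exact Or.inr (Or.inl ⟨Reach.refl, h1⟩)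
        · exact Or.inr (Or.inl ⟨Reach.refl, h2⟩)
        · exact Or.inl h2
      · subst hxc; subst hya
        rcases ih with h1 | ⟨h1, h2⟩ | ⟨h1, h2⟩
        · exact Or.inr (Or.inr ⟨Reach.refl, h1⟩)
        · exact Or.inl h2
        · exact Or.inr (Or.inr ⟨Reach.refl, h2⟩)
    · have h1 : Reach G S a' c := Reach.single ⟨e, heS, hge⟩
      rcases ih with h2 | ⟨h2, h3⟩ | ⟨h2, h3⟩
      · exact Or.inl (h1.trans h2)
      · exact Or.inr (Or.inl ⟨h1.trans h2, h3⟩)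
      · exact Or.inr (Or.inr ⟨h1.trans h2, h3⟩)

theorem cc_insert_of_reach (hf : G f = s(x, y)) (hr : Reach G S x y) :
    cc G (insert f S) = cc G S := by
  have hsub : S ⊆ insert f S := Finset.subset_insert f S
  refine (Nat.card_eq_of_bijective (ccMap G hsub) ⟨?_, ccMap_surj hsub⟩).symm
  intro q q' h
  obtain ⟨a, rfl⟩ := Quot.exists_rep q
  obtain ⟨b, rfl⟩ := Quot.exists_rep q'
  rw [ccMap_mk, ccMap_mk] at h
  refine quot_mk_eq_iff.mpr ?_
  rcases reach_insert_split hf (quot_mk_eq_iff.mp h) with h1 | ⟨h1, h2⟩ | ⟨h1, h2⟩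
  · exact h1
  · exact (h1.trans hr).trans h2
  · exact (h1.trans hr.symm).trans h2

theorem cc_insert_of_not_reach (hf : G f = s(x, y)) (hnr : ¬ Reach G S x y) :
    cc G (insert f S) + 1 = cc G S := by
  have hsub : S ⊆ insert f S := Finset.subset_insert f S
  have hxy : Reach G (insert f S) x y :=
    Reach.single ⟨f, Finset.mem_insert_self f S, hf⟩
  have hlt : cc G (insert f S) < cc G S := by
    rcases Nat.lt_or_ge (cc G (insert f S)) (cc G S) with h | h
    · exact h
    · exfalso
      have hcards : cc G S = cc G (insert f S) := le_antisymm h (cc_le hsub)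
      have hbij : Function.Bijective (ccMap G hsub) :=
        (Nat.bijective_iff_surjective_and_card _).mpr ⟨ccMap_surj hsub, hcards⟩
      have h2 := hbij.injective (a₁ := Quot.mk _ x) (a₂ := Quot.mk _ y)
        (by rw [ccMap_mk, ccMap_mk]; exact quot_mk_eq_iff.mpr hxy)
      exact hnr (quot_mk_eq_iff.mp h2)
  have hge : cc G S ≤ cc G (insert f S) + 1 := by
    have hinj : Function.Injective
        (fun q : Quot (step G S) =>
          if q = Quot.mk (step G S) y then (none : Option (Quot (step G (insert f S))))
          else some (ccMap G hsub q)) := by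
      intro q q' h
      obtain ⟨a, rfl⟩ := Quot.exists_rep q
      obtain ⟨b, rfl⟩ := Quot.exists_rep q'
      dsimp only at h
      by_cases h1 : Quot.mk (step G S) a = Quot.mk (step G S) y <;>
        by_cases h2 : Quot.mk (step G S) b = Quot.mk (step G S) y
      · rw [h1, h2]
      · rw [if_pos h1, if_neg h2] at h; cases h
      · rw [if_neg h1, if_pos h2] at h; cases h
      · rw [if_neg h1, if_neg h2] at h
        replace h := Option.some.inj h
        rw [ccMap_mk, ccMap_mk] at h
        rcases reach_insert_split hf (quot_mk_eq_iff.mp h) with h3 | ⟨h3, h4⟩ | ⟨h3, h4⟩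
        · exact quot_mk_eq_iff.mpr h3
        · exact absurd (quot_mk_eq_iff.mpr h4).symm h2
        · exact absurd (quot_mk_eq_iff.mpr h3) h1
    haveI : Finite (Quot (step G (insert f S))) :=
      Finite.of_surjective (Quot.mk (step G (insert f S))) Quot.mk_surjective
    haveI := Fintype.ofFinite (Quot (step G (insert f S)))
    calc cc G S ≤ Nat.card (Option (Quot (step G (insert f S)))) :=
          Nat.card_le_card_of_injective _ hinj
      _ = cc G (insert f S) + 1 := Finite.card_option
  omega

theorem cc_insert_ge : cc G S ≤ cc G (insert f S) + 1 := by
  obtain ⟨x, y, hf⟩ := exists_endpoints (G f)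
  by_cases hr : Reach G S x y
  · rw [cc_insert_of_reach hf hr]; omega
  · exact (cc_insert_of_not_reach hf hr).ge

theorem card_lower (G : E → Sym2 V) (S : Finset E) :
    Fintype.card V ≤ S.card + cc G S := by
  induction S using Finset.induction_on with
  | empty => simp [cc_empty]
  | @insert a s ha ih =>
    have h2 : cc G s ≤ cc G (insert a s) + 1 := cc_insert_ge
    rw [Finset.card_insert_of_notMem ha]
    omega

theorem eq_of_reach_isolated (hw : ∀ e ∈ S, w ∉ G e) (h : Reach G S w b) : w = b := by
  rcases Relation.ReflTransGen.cases_head h with h1 | ⟨c, ⟨e, he, hge⟩, _⟩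
  · exact h1
  · exact absurd (by rw [hge]; exact Sym2.mem_mk_left _ _) (hw e he)

theorem ext_lemma (G : E → Sym2 V) (B : Finset E) :
    ∀ (k : ℕ) (S : Finset E), cc G S ≤ k → S ⊆ B →
      S.card + cc G S = Fintype.card V →
      ∃ T, S ⊆ T ∧ T ⊆ B ∧ T.card + cc G T = Fintype.card V ∧ cc G T = cc G B := by
  intro k
  induction k with
  | zero =>
    intro S hk hSB hcard
    have hBle : cc G B ≤ cc G S := cc_le hSB
    exact ⟨S, Finset.Subset.refl S, hSB, hcard, by omega⟩
  | succ k ih =>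
    intro S hk hSB hcard
    by_cases heq : cc G S = cc G B
    · exact ⟨S, Finset.Subset.refl S, hSB, hcard, heq⟩
    · have hex : ∃ f ∈ B, ∃ x y, G f = s(x, y) ∧ ¬ Reach G S x y := by
        by_contra hno
        push_neg at hno
        exact heq (cc_eq_of_closure hSB
          (fun x y hs => by obtain ⟨e, he, hge⟩ := hs; exact hno e he x y hge)).symm
      obtain ⟨f, hfB, x, y, hf, hnr⟩ := hex
      have hfS : f ∉ S := fun hfS => hnr (Reach.single ⟨f, hfS, hf⟩)
      have hccins := cc_insert_of_not_reach hf hnr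
      have hcard' : (insert f S).card + cc G (insert f S) = Fintype.card V := by
        rw [Finset.card_insert_of_notMem hfS]; omega
      obtain ⟨T, h1, h2, h3, h4⟩ :=
        ih (insert f S) (by omega) (Finset.insert_subset hfB hSB) hcard'
      exact ⟨T, (Finset.subset_insert f S).trans h1, h2, h3, h4⟩

theorem comps_spanningSub (G : E → Sym2 V) (S : Finset E) :
    comps G (spanningSub G S) = cc G S :=
  Nat.card_congr
    (Quot.congr (Equiv.subtypeUnivEquiv fun x => Finset.mem_univ x) fun _ _ => Iff.rfl)

theorem reach_of_h2conn (h2 : comps G (deleteVert G w) = 1) (ha : a ≠ w) (hb : b ≠ w) :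
    Reach G (Finset.univ.filter fun e => w ∉ G e) a b := by
  haveI hsub : Subsingleton
      (Quot fun p q : {v : V // v ∈ (deleteVert G w).verts} =>
        ∃ e ∈ (deleteVert G w).edges, G e = s(p.1, q.1)) :=
    (Nat.card_eq_one_iff_unique.mp h2).1
  have hmem : ∀ v : V, v ≠ w → v ∈ (deleteVert G w).verts := fun v hv =>
    Finset.mem_erase.mpr ⟨hv, Finset.mem_univ v⟩
  have heq := hsub.elim (Quot.mk _ ⟨a, hmem a ha⟩) (Quot.mk _ ⟨b, hmem b hb⟩)
  have hEG := Quot.eq.mp heq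
  clear heq
  suffices H : ∀ p q : {v : V // v ∈ (deleteVert G w).verts},
      Relation.EqvGen (fun p q : {v : V // v ∈ (deleteVert G w).verts} =>
        ∃ e ∈ (deleteVert G w).edges, G e = s(p.1, q.1)) p q →
      Reach G (Finset.univ.filter fun e => w ∉ G e) p.1 q.1 by
    exact H _ _ hEG
  intro p q hpq
  induction hpq with
  | rel p q hr => exact Reach.single hr
  | refl _ => exact Reach.refl
  | symm _ _ _ ih => exact ih.symm
  | trans _ _ _ _ _ ih1 ih2 => exact ih1.trans ih2

theorem cc_del {aa : V} (h2 : comps G (deleteVert G w) = 1) (haw : aa ≠ w) :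
    cc G (Finset.univ.filter fun e => w ∉ G e) = 2 := by
  set D : Finset E := Finset.univ.filter fun e => w ∉ G e with hD
  have hiso : ∀ e ∈ D, w ∉ G e := fun e he => (Finset.mem_filter.mp he).2
  have hne : Quot.mk (step G D) w ≠ Quot.mk (step G D) aa := by
    intro h
    exact haw (eq_of_reach_isolated hiso (quot_mk_eq_iff.mp h)).symm
  have hle : cc G D ≤ 2 := by
    have hsurj : Function.Surjective
        (fun t : Bool => if t then Quot.mk (step G D) w else Quot.mk (step G D) aa) := by
      intro q
      obtain ⟨v, rfl⟩ := Quot.exists_rep q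
      by_cases hvw : v = w
      · exact ⟨true, by simp [hvw]⟩
      · refine ⟨false, ?_⟩
        simp only [Bool.false_eq_true, if_false]
        exact quot_mk_eq_iff.mpr (reach_of_h2conn h2 haw hvw)
    calc cc G D ≤ Nat.card Bool := Nat.card_le_card_of_surjective _ hsurj
      _ = 2 := by rw [Nat.card_eq_fintype_card]; exact Fintype.card_bool
  have hgt : 1 < cc G D := by
    haveI : Nontrivial (Quot (step G D)) := ⟨⟨_, _, hne⟩⟩
    exact Finite.one_lt_card
  omega

/-- The unit coordinate vector. -/
def uvec (e : E) : E → ℝ := fun g => if g = e then 1 else 0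

/-- Key construction: for any vertex `w` and any two edges at `w`, there is a common
"spanning tree of `G - w`" `P'` such that adding either edge gives a spanning tree. -/
theorem adjacent_trees {G : E → Sym2 V} (hloop : ∀ e, ¬ (G e).IsDiag)
    {w aa : V} (h2 : comps G (deleteVert G w) = 1) (haw : aa ≠ w)
    {f f' : E} (hwf : w ∈ G f) (hwf' : w ∈ G f') :
    ∃ P' : Finset E, f ∉ P' ∧ f' ∉ P' ∧
      IsSpanningTree G (insert f P') ∧ IsSpanningTree G (insert f' P') := by
  have hccD : cc G (Finset.univ.filter fun e => w ∉ G e) = 2 := cc_del h2 haw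
  obtain ⟨P', -, hP'D, hPcard, hPcc⟩ :=
    ext_lemma G (Finset.univ.filter fun e => w ∉ G e) (cc G (∅ : Finset E)) ∅ le_rfl
      (Finset.empty_subset _) (by simp [cc_empty])
  rw [hccD] at hPcc
  have hiso : ∀ e ∈ P', w ∉ G e := fun e he => (Finset.mem_filter.mp (hP'D he)).2
  have key : ∀ g : E, w ∈ G g → g ∉ P' ∧ IsSpanningTree G (insert g P') := by
    intro g hwg
    have hgP : g ∉ P' := fun h => hiso g h hwg
    obtain ⟨u, hu⟩ := Sym2.mem_iff_exists.mp hwg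
    have huw : u ≠ w := by
      intro h
      exact hloop g (by rw [hu, h]; exact Sym2.mk_isDiag_iff.mpr rfl)
    have hnr : ¬ Reach G P' w u := fun h => huw (eq_of_reach_isolated hiso h).symm
    have hcc := cc_insert_of_not_reach hu hnr
    refine ⟨hgP, ?_, ?_⟩
    · rw [Finset.card_insert_of_notMem hgP]; omega
    · rw [comps_spanningSub]; omega
  obtain ⟨h1, h2'⟩ := key f hwf
  obtain ⟨h3, h4⟩ := key f' hwf'
  exact ⟨P', h1, h3, h2', h4⟩

end SP

/-- For a 2-connected graph without self-loops, the spanning tree polytope `SP_Γ`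
(convex hull of incidence vectors of complements of spanning trees) has dimension
`|E| - 1`. -/
theorem spanningTree_polytope_dim (G : E → Sym2 V)
    (hconn : GraphConnected G)
    (hloop : ∀ e, ¬ (G e).IsDiag)
    (h2conn : ∀ v : V, comps G (deleteVert G v) = 1) :
    Module.finrank ℝ
        (vectorSpan ℝ (convexHull ℝ {x : E → ℝ | ∃ T, IsSpanningTree G T ∧ x = ind Tᶜ})) =
      Fintype.card E - 1 := by
  classical
  open SP in
  set s : Set (E → ℝ) := {x : E → ℝ | ∃ T, IsSpanningTree G T ∧ x = ind Tᶜ} with hs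
  rcases isEmpty_or_nonempty E with hE | hE
  · have h0 : Fintype.card E = 0 := Fintype.card_eq_zero
    have hle : Module.finrank ℝ (vectorSpan ℝ (convexHull ℝ s)) ≤
        Module.finrank ℝ (E → ℝ) := Submodule.finrank_le _
    rw [Module.finrank_fintype_fun_eq_card] at hle
    omega
  obtain ⟨e₀⟩ := hE
  obtain ⟨v₀, u₀, he₀⟩ := SP.exists_endpoints (G e₀)
  have hv₀u₀ : v₀ ≠ u₀ := by
    intro h
    exact hloop e₀ (by rw [he₀, h]; exact Sym2.mk_isDiag_iff.mpr rfl)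
  have hcc1 : SP.cc G (Finset.univ : Finset E) = 1 := by
    rw [← SP.comps_spanningSub]; exact hconn
  -- the sum-of-coordinates functional
  set L : (E → ℝ) →ₗ[ℝ] ℝ := ∑ e : E, LinearMap.proj e with hL
  have hLapp : ∀ x : E → ℝ, L x = ∑ e : E, x e := by
    intro x
    rw [hL, LinearMap.sum_apply]
    simp [LinearMap.proj_apply]
  have hsum_ind : ∀ A : Finset E, L (ind A) = (A.card : ℝ) := by
    intro A
    rw [hLapp]
    simp [ind, Finset.sum_boole, Finset.filter_mem_eq_inter]
  -- upper bound: differences sum to zero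
  have hW : vectorSpan ℝ (convexHull ℝ s) = vectorSpan ℝ s := by
    rw [← direction_affineSpan, affineSpan_convexHull, direction_affineSpan]
  have hker : vectorSpan ℝ s ≤ LinearMap.ker L := by
    rw [vectorSpan_def, Submodule.span_le]
    rintro z hz
    rw [Set.mem_vsub] at hz
    obtain ⟨p, hp, q, hq, rfl⟩ := hz
    obtain ⟨T, hT, rfl⟩ := hp
    obtain ⟨T', hT', rfl⟩ := hq
    have hcards : Tᶜ.card = T'ᶜ.card := by
      rw [Finset.card_compl, Finset.card_compl]
      have h1 := hT.1
      have h2 := hT'.1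
      omega
    simp only [SetLike.mem_coe, LinearMap.mem_ker, vsub_eq_sub]
    rw [map_sub, hsum_ind, hsum_ind, hcards, sub_self]
  -- adjacency: two edges sharing a vertex give a difference vector in the span
  have hadj : ∀ (w : V) (f f' : E), w ∈ G f → w ∈ G f' →
      SP.uvec f' - SP.uvec f ∈ vectorSpan ℝ s := by
    intro w f f' hwf hwf'
    by_cases hff : f' = f
    · rw [hff, sub_self]; exact Submodule.zero_mem _
    · have hex_aa : ∃ aa : V, aa ≠ w := by
        by_cases hvw : v₀ = w
        · exact ⟨u₀, fun h => hv₀u₀ (by rw [hvw, h])⟩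
        · exact ⟨v₀, hvw⟩
      obtain ⟨aa, haw⟩ := hex_aa
      obtain ⟨P', hfP', hf'P', hTf, hTf'⟩ :=
        SP.adjacent_trees hloop (h2conn w) haw hwf hwf'
      have hxmem : ind (insert f P')ᶜ ∈ s := ⟨insert f P', hTf, rfl⟩
      have hymem : ind (insert f' P')ᶜ ∈ s := ⟨insert f' P', hTf', rfl⟩
      have hmem := vsub_mem_vectorSpan ℝ hxmem hymem
      rw [vsub_eq_sub] at hmem
      have hff' : f ≠ f' := fun hh => hff hh.symm
      have heq : SP.uvec f' - SP.uvec f = ind (insert f P')ᶜ - ind (insert f' P')ᶜ := by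
        funext g
        simp only [Pi.sub_apply, SP.uvec, ind, Finset.mem_compl, Finset.mem_insert]
        by_cases h1 : g = f' <;> by_cases h2 : g = f
        · exact absurd (h1.symm.trans h2) hff
        · subst h1; simp [h2, hf'P', hff]
        · subst h2; simp [h1, hfP', hff']
        · by_cases h3 : g ∈ P' <;> simp [h1, h2, h3]
      rw [heq]
      exact hmem
  -- chain along reachability: all difference vectors are in the span
  have hchain : ∀ (a b : V), SP.Reach G Finset.univ a b →
      ∀ e f : E, a ∈ G e → b ∈ G f → SP.uvec e - SP.uvec f ∈ vectorSpan ℝ s := by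
    intro a b hab
    induction hab using Relation.ReflTransGen.head_induction_on with
    | refl => exact fun e f h1 h2 => hadj b f e h2 h1
    | @head a' c h' _ ih =>
      intro e f hae hbf
      obtain ⟨g, _, hgs⟩ := h'
      have hag : a' ∈ G g := by rw [hgs]; exact Sym2.mem_mk_left _ _
      have hcg : c ∈ G g := by rw [hgs]; exact Sym2.mem_mk_right _ _
      have h1 : SP.uvec e - SP.uvec g ∈ vectorSpan ℝ s := hadj a' g e hag hae
      have h2 : SP.uvec g - SP.uvec f ∈ vectorSpan ℝ s := ih g f hcg hbf
      have h3 := Submodule.add_mem _ h1 h2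
      rwa [sub_add_sub_cancel] at h3
  have hrel : ∀ e f : E, SP.uvec e - SP.uvec f ∈ vectorSpan ℝ s := by
    intro e f
    obtain ⟨x1, y1, h1⟩ := SP.exists_endpoints (G e)
    obtain ⟨x2, y2, h2⟩ := SP.exists_endpoints (G f)
    exact hchain x1 x2 (SP.reach_of_cc_one hcc1 x1 x2) e f
      (by rw [h1]; exact Sym2.mem_mk_left _ _) (by rw [h2]; exact Sym2.mem_mk_left _ _)
  -- lower bound: the kernel of L is inside the span
  have hker2 : (LinearMap.ker L : Submodule ℝ (E → ℝ)) ≤ vectorSpan ℝ s := by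
    intro x hx
    rw [LinearMap.mem_ker, hLapp] at hx
    have hxsum : x = ∑ e : E, x e • (SP.uvec e - SP.uvec e₀) := by
      funext g
      rw [Finset.sum_apply]
      simp only [Pi.smul_apply, Pi.sub_apply, SP.uvec, smul_eq_mul, mul_sub,
        mul_ite, mul_one, mul_zero]
      rw [Finset.sum_sub_distrib]
      by_cases hg : g = e₀ <;>
        simp [hg, hx, Finset.sum_ite_eq]
    rw [hxsum]
    exact Submodule.sum_mem _ fun e _ => Submodule.smul_mem _ _ (hrel e e₀)
  have hWU : vectorSpan ℝ (convexHull ℝ s) = LinearMap.ker L := by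
    rw [hW]; exact le_antisymm hker hker2
  rw [hWU]
  have hsurjL : LinearMap.range L = ⊤ := by
    rw [LinearMap.range_eq_top]
    intro r
    refine ⟨fun g => if g = e₀ then r else 0, ?_⟩
    rw [hLapp]
    simp
  have hrk := LinearMap.finrank_range_add_finrank_ker L
  rw [hsurjL, finrank_top, Module.finrank_self, Module.finrank_fintype_fun_eq_card] at hrk
  have hEpos : 0 < Fintype.card E := Fintype.card_pos_iff.mpr ⟨e₀⟩
  omega
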